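/- Let Γ=(X,R) be a finite connected nontrivial k-regular graph with adjacency matrix A, and Y a non-empty proper subset of X. If there are constants h₁, h₂ such that every vertex of Y is adjacent to exactly h₁ vertices of Y and every vertex of X∖Y is adjacent to exactly h₂ vertices of Y, then the characteristic vector χ_Y lies in V₀ ⊕ Vᵢ for some eigenspace Vᵢ of A with i ≥ 1, where V₀ is the span of the all-ones vector. -/

import Mathlib

open Finset

lemma cross_edge {X : Type*} (G : SimpleGraph X) (Y : Finset X) {a b : X}
    (p : G.Walk a b) : a ∈ Y → b ∉ Y → ∃ u v, G.Adj u v ∧ u ∈ Y ∧ v ∉ Y := by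
  induction p with
  | nil => exact fun h h' => absurd h h'
  | @cons u w b h p ih =>
    intro ha hb
    by_cases hw : w ∈ Y
    · exact ih hw hb
    · exact ⟨u, w, h, ha, hw⟩

theorem stmt_1 {X : Type*} [Fintype X] [DecidableEq X]
    (G : SimpleGraph X) [DecidableRel G.Adj]
    (k : ℕ) (hreg : G.IsRegularOfDegree k)
    (hconn : G.Connected) (hne : G ≠ ⊥) (hnc : G ≠ ⊤)
    (Y : Finset X) (hY : Y.Nonempty) (hYp : Y ≠ Finset.univ)
    (h₁ h₂ : ℕ)
    (hin : ∀ x ∈ Y, (Finset.univ.filter (fun y => y ∈ Y ∧ G.Adj x y)).card = h₁)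
    (hout : ∀ x ∉ Y, (Finset.univ.filter (fun y => y ∈ Y ∧ G.Adj x y)).card = h₂) :
    ∃ (θ c : ℝ) (v : X → ℝ), v ≠ 0 ∧ θ ≠ (k : ℝ) ∧
      (G.adjMatrix ℝ).mulVec v = θ • v ∧
      ∀ x, (if x ∈ Y then (1:ℝ) else 0) = c + v x := by
  obtain ⟨x₀, hx₀⟩ := hY
  obtain ⟨y₀, hy₀⟩ : ∃ y, y ∉ Y := by
    by_contra h
    push_neg at h
    exact hYp (Finset.eq_univ_of_forall h)
  -- filter equality
  have hfe : ∀ x : X, Finset.univ.filter (fun y => y ∈ Y ∧ G.Adj x y)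
      = (G.neighborFinset x).filter (· ∈ Y) := by
    intro x
    ext u
    simp [SimpleGraph.mem_neighborFinset, and_comm]
  have hk1 : h₁ ≤ k := by
    rw [← hin x₀ hx₀, ← hreg x₀, ← SimpleGraph.card_neighborFinset_eq_degree, hfe]
    exact Finset.card_filter_le _ _
  have hθk : (h₁ : ℝ) - h₂ ≠ (k : ℝ) := by
    intro h
    have hh2 : h₂ = 0 := by
      have : (h₂ : ℝ) = (h₁ : ℝ) - k := by linarith
      have hle : (h₂ : ℝ) ≤ 0 := by
        rw [this]; have := (Nat.cast_le (α := ℝ)).2 hk1; linarith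
      exact_mod_cast le_antisymm (by exact_mod_cast hle) (Nat.zero_le h₂)
    obtain ⟨u, v, huv, hu, hv⟩ := cross_edge G Y ((hconn x₀ y₀).some) hx₀ hy₀
    have := hout v hv
    rw [hh2, Finset.card_eq_zero] at this
    have : u ∈ (∅ : Finset X) := by
      rw [← this]; simp [hu, huv.symm]
    simp at this
  set θ : ℝ := (h₁ : ℝ) - h₂ with hθ
  have hkθ : (k : ℝ) - θ ≠ 0 := fun h => hθk (by linarith)
  set c : ℝ := h₂ / ((k : ℝ) - θ) with hc
  have hcv : c * ((k : ℝ) - θ) = h₂ := div_mul_cancel₀ _ hkθ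
  set v : X → ℝ := fun x => (if x ∈ Y then (1:ℝ) else 0) - c with hv
  refine ⟨θ, c, v, ?_, hθk, ?_, fun x => by simp [hv]⟩
  · intro h
    have h1 : v x₀ = 0 := congrFun h x₀
    have h2 : v y₀ = 0 := congrFun h y₀
    simp [hv, hx₀, hy₀] at h1 h2
    linarith
  · funext x
    have hsum : (G.adjMatrix ℝ).mulVec v x
        = (((G.neighborFinset x).filter (· ∈ Y)).card : ℝ) - (k : ℝ) * c := by
      rw [SimpleGraph.adjMatrix_mulVec_apply]
      rw [hv]
      rw [Finset.sum_sub_distrib, Finset.sum_boole, Finset.sum_const]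
      rw [SimpleGraph.card_neighborFinset_eq_degree, hreg x, nsmul_eq_mul]
    by_cases hx : x ∈ Y
    · have := hin x hx
      rw [hfe] at this
      simp only [Pi.smul_apply, smul_eq_mul, hsum, this, hv, hx, if_pos]
      have key : (h₁ : ℝ) - k * c = θ * (1 - c) := by
        rw [hc, hθ] at *
        field_simp
        ring
      rw [← hv, hsum, this]
      linarith [key]
    · have := hout x hx
      rw [hfe] at this
      simp only [Pi.smul_apply, smul_eq_mul, hsum, this, hv, hx, if_neg, not_false_iff]
      have key : (h₂ : ℝ) - k * c = θ * (0 - c) := by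
        rw [hc, hθ] at *
        field_simp
        ring
      rw [← hv, hsum, this]
      linarith [key]
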